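/- Fix integers m = k > 2 and let Ω₀⁰ be as above. Then the stabilizer of Ω₀⁰ in O(4) is isomorphic to the dihedral group of order 8, and contains the group {id, R_{Σ₀}, R_{Σ⁰}, R_{C₀⁰}} (as in the previous statement) as a subgroup of index 2. -/

import Mathlib

open Real

noncomputable section

abbrev E4 := EuclideanSpace ℝ (Fin 4)

def pt (a b c d : ℝ) : E4 := WithLp.toLp 2 ![a, b, c, d]

def tLow (m : ℕ) (i : ℝ) : E4 := pt (cos (i * π / m)) (sin (i * π / m)) 0 0

def tUp (k : ℕ) (j : ℝ) : E4 := pt 0 0 (cos (j * π / k)) (sin (j * π / k))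

def vert (m k : ℕ) : Fin 4 → E4 :=
  ![tLow m (-(1/2)), tLow m (1/2), tUp k (-(1/2)), tUp k (1/2)]

/-- The spherical tetrahedron `Ω₀⁰`. -/
def Tet (m k : ℕ) : Set E4 :=
  {u | ‖u‖ = 1 ∧ ∃ c : Fin 4 → ℝ, (∀ i, 0 ≤ c i) ∧
    ∃ r : ℝ, 0 < r ∧ r • u = ∑ i, c i • vert m k i}

def rSigLow (x : E4) : E4 := pt (x 0) (-(x 1)) (x 2) (x 3)

def rSigUp (x : E4) : E4 := pt (x 0) (x 1) (x 2) (-(x 3))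

def rC (x : E4) : E4 := pt (x 0) (-(x 1)) (x 2) (-(x 3))

namespace Stmt11

/-! ### Generic signed-permutation isometries -/

def isomAux (τ : Equiv.Perm (Fin 4)) (ε : Fin 4 → ℝ) (hε : ∀ i, ε i * ε i = 1) :
    E4 ≃ₗᵢ[ℝ] E4 where
  toFun x := WithLp.toLp 2 (fun i => ε i * x (τ i))
  invFun y := WithLp.toLp 2 (fun j => ε (τ.symm j) * y (τ.symm j))
  left_inv x := by
    ext j
    show ε (τ.symm j) * (ε (τ.symm j) * x (τ (τ.symm j))) = x j
    rw [← mul_assoc, hε, one_mul, Equiv.apply_symm_apply]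
  right_inv y := by
    ext i
    show ε i * (ε (τ.symm (τ i)) * y (τ.symm (τ i))) = y i
    rw [Equiv.symm_apply_apply, ← mul_assoc, hε, one_mul]
  map_add' x y := by
    ext i
    show ε i * (x (τ i) + y (τ i)) = ε i * x (τ i) + ε i * y (τ i)
    ring
  map_smul' c x := by
    ext i
    show ε i * (c * x (τ i)) = c * (ε i * x (τ i))
    ring
  norm_map' x := by
    simp only [EuclideanSpace.norm_eq]
    congr 1
    have key : ∀ i, ‖ε i * x (τ i)‖^2 = ‖x (τ i)‖^2 := by
      intro i
      rw [norm_mul]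
      rcases mul_self_eq_one_iff.1 (hε i) with h1 | h1 <;> simp [h1]
    calc ∑ i, ‖(WithLp.toLp 2 (fun i => ε i * x (τ i)) : E4) i‖^2 = ∑ i, ‖x (τ i)‖^2 :=
          Finset.sum_congr rfl fun i _ => key i
      _ = ∑ i, ‖x i‖^2 := Equiv.sum_comp τ (fun j => ‖x j‖^2)

def pRot : Equiv.Perm (Fin 4) := (Equiv.swap 0 2) * (Equiv.swap 1 3)

def rot : E4 ≃ₗᵢ[ℝ] E4 := isomAux pRot ![1, 1, 1, -1] (by intro i; fin_cases i <;> norm_num)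

def ref : E4 ≃ₗᵢ[ℝ] E4 := isomAux 1 ![1, -1, 1, 1] (by intro i; fin_cases i <;> norm_num)

lemma rot_apply (x : E4) : rot x = WithLp.toLp 2 ![x 2, x 3, x 0, -(x 1)] := by
  ext i
  show (![1, 1, 1, -1] : Fin 4 → ℝ) i * x (pRot i) = _
  fin_cases i <;> simp [pRot, Equiv.swap_apply_def] <;> norm_num

lemma ref_apply (x : E4) : ref x = WithLp.toLp 2 ![x 0, -(x 1), x 2, x 3] := by
  ext i
  show (![1, -1, 1, 1] : Fin 4 → ℝ) i * x ((1 : Equiv.Perm (Fin 4)) i) = _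
  fin_cases i <;> simp

lemma happ (a b : E4 ≃ₗᵢ[ℝ] E4) (x : E4) : (a * b) x = a (b x) := rfl

lemma ref_coe : ⇑ref = rSigLow := by
  funext x
  rw [ref_apply]
  ext i
  fin_cases i <;> simp [rSigLow, pt]

lemma refrot2_coe : ⇑(ref * rot ^ 2) = rSigUp := by
  funext x
  rw [happ, pow_two, happ, rot_apply, rot_apply, ref_apply]
  ext i
  fin_cases i <;> simp [rSigUp, pt]

lemma rot2_coe : ⇑(rot ^ 2) = rC := by
  funext x
  rw [pow_two, happ, rot_apply, rot_apply]
  ext i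
  fin_cases i <;> simp [rC, pt]


lemma rot4 : rot ^ 4 = 1 := by
  apply LinearIsometryEquiv.ext
  intro x
  simp only [pow_succ, pow_zero, one_mul]
  rw [happ, happ, happ, rot_apply, rot_apply, rot_apply, rot_apply]
  ext i
  fin_cases i <;> simp

lemma ref2 : ref * ref = 1 := by
  apply LinearIsometryEquiv.ext
  intro x
  rw [happ, ref_apply, ref_apply]
  ext i
  fin_cases i <;> simp

lemma rotref : rot * ref = ref * rot ^ 3 := by
  apply LinearIsometryEquiv.ext
  intro x
  simp only [pow_succ, pow_zero, one_mul]
  rw [happ, happ, happ, happ, rot_apply, rot_apply, rot_apply, ref_apply, ref_apply, rot_apply]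
  ext i
  fin_cases i <;> simp

lemma rot_mod (n : ℕ) : rot ^ (n % 4) = rot ^ n := by
  conv_rhs => rw [← Nat.div_add_mod n 4, pow_add, pow_mul, rot4, one_pow, one_mul]

lemma pow_ref (n : ℕ) : rot ^ n * ref = ref * rot ^ (3 * n) := by
  induction n with
  | zero => simp
  | succ k ih =>
      have : rot ^ (k + 1) * ref = rot ^ k * (rot * ref) := by
        rw [pow_succ, mul_assoc]
      rw [this, rotref, ← mul_assoc, ih, mul_assoc, ← pow_add, Nat.mul_succ]

lemma val_add_pow (i j : ZMod 4) : rot ^ ((i + j).val) = rot ^ i.val * rot ^ j.val := by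
  rw [← pow_add, ← rot_mod (i.val + j.val), ← ZMod.val_add]

lemma val_sub_pow (i j : ZMod 4) : rot ^ ((j - i).val) = rot ^ (3 * i.val) * rot ^ j.val := by
  have h1 : j - i = 3 * i + j := by
    have h3 : (3 : ZMod 4) = -1 := by decide
    rw [h3]; ring
  have h2 : ((3 : ZMod 4) * i).val = 3 * i.val % 4 := by
    rw [ZMod.val_mul, show (3 : ZMod 4).val = 3 from rfl]
  rw [h1, ZMod.val_add, h2, rot_mod, pow_add, rot_mod]

def EE : DihedralGroup 4 → (E4 ≃ₗᵢ[ℝ] E4)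
  | .r i => rot ^ i.val
  | .sr i => ref * rot ^ i.val

lemma EE_mul (a b : DihedralGroup 4) : EE (a * b) = EE a * EE b := by
  rcases a with i | i <;> rcases b with j | j
  · show EE (.r (i + j)) = _
    show rot ^ ((i+j).val) = rot ^ i.val * rot ^ j.val
    exact val_add_pow i j
  · show EE (.sr (j - i)) = _
    show ref * rot ^ ((j - i).val) = rot ^ i.val * (ref * rot ^ j.val)
    rw [val_sub_pow, ← mul_assoc, ← mul_assoc, ← pow_ref]
  · show EE (.sr (i + j)) = _
    show ref * rot ^ ((i+j).val) = (ref * rot ^ i.val) * rot ^ j.val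
    rw [val_add_pow, mul_assoc]
  · show EE (.r (j - i)) = _
    show rot ^ ((j - i).val) = (ref * rot ^ i.val) * (ref * rot ^ j.val)
    rw [val_sub_pow, mul_assoc, ← mul_assoc (rot ^ i.val), pow_ref, ← mul_assoc, ← mul_assoc,
      ref2, one_mul]


/-! ### Vertices -/

variable {m : ℕ}

lemma vert0 : vert m m 0 = pt (cos ((1/2) * π / m)) (-sin ((1/2) * π / m)) 0 0 := by
  simp [vert, tLow, pt, neg_div, Real.cos_neg, Real.sin_neg]
lemma vert1 : vert m m 1 = pt (cos ((1/2) * π / m)) (sin ((1/2) * π / m)) 0 0 := by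
  simp [vert, tLow, pt]
lemma vert2 : vert m m 2 = pt 0 0 (cos ((1/2) * π / m)) (-sin ((1/2) * π / m)) := by
  simp [vert, tUp, pt, neg_div, Real.cos_neg, Real.sin_neg]
lemma vert3 : vert m m 3 = pt 0 0 (cos ((1/2) * π / m)) (sin ((1/2) * π / m)) := by
  simp [vert, tUp, pt]

def Gmat (m : ℕ) : Fin 4 → Fin 4 → ℝ :=
  ![![1, cos (π/m), 0, 0], ![cos (π/m), 1, 0, 0],
    ![0, 0, 1, cos (π/m)], ![0, 0, cos (π/m), 1]]

lemma inner_vert (i j : Fin 4) : (inner ℝ (vert m m i) (vert m m j) : ℝ) = Gmat m i j := by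
  have h2 : π / m = 2 * ((1/2) * π / m) := by ring
  have hs := sin_sq_add_cos_sq ((1/2) * π / m)
  have hc := Real.cos_two_mul ((1/2) * π / m)
  rw [EuclideanSpace.inner_eq_star_dotProduct]
  fin_cases i <;> fin_cases j <;>
    simp [dotProduct, vert0, vert1, vert2, vert3, Gmat, pt, PiLp.inner_apply, RCLike.inner_apply,
      Fin.sum_univ_four, Matrix.vecHead, Matrix.vecTail] <;>
    first
      | nlinarith [hs]
      | (rw [h2, hc]; nlinarith [hs])

lemma theta_mem (hm : 2 < m) :
    0 < (1/2) * π / m ∧ (1/2) * π / m < π / 2 := by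
  have hπ := Real.pi_pos
  have hm' : (2 : ℝ) < m := by exact_mod_cast hm
  constructor
  · positivity
  · rw [div_lt_iff₀ (by linarith)]
    nlinarith

lemma cos_theta_pos (hm : 2 < m) : 0 < cos ((1/2) * π / m) := by
  obtain ⟨h1, h2⟩ := theta_mem hm
  exact Real.cos_pos_of_mem_Ioo ⟨by linarith, h2⟩

lemma sin_theta_pos (hm : 2 < m) : 0 < sin ((1/2) * π / m) := by
  obtain ⟨h1, h2⟩ := theta_mem hm
  have := Real.pi_pos
  exact Real.sin_pos_of_pos_of_lt_pi h1 (by linarith)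

lemma gam_pos (hm : 2 < m) : 0 < cos (π / m) := by
  have hπ := Real.pi_pos
  have hm' : (2 : ℝ) < m := by exact_mod_cast hm
  refine Real.cos_pos_of_mem_Ioo ⟨by nlinarith [div_pos hπ (show (0:ℝ) < (m:ℝ) by linarith)], ?_⟩
  rw [div_lt_div_iff₀ (by linarith) (by norm_num : (0:ℝ) < 2)]
  nlinarith

lemma gam_lt_one (hm : 2 < m) : cos (π / m) < 1 := by
  have h2 : π / m = 2 * ((1/2) * π / m) := by ring
  have hs := sin_theta_pos hm
  have h := sin_sq_add_cos_sq ((1/2) * π / m)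
  rw [h2, Real.cos_two_mul]
  nlinarith

lemma norm_vert (i : Fin 4) : ‖vert m m i‖ = 1 := by
  have h : (inner ℝ (vert m m i) (vert m m i) : ℝ) = 1 := by
    rw [inner_vert]
    fin_cases i <;> simp [Gmat]
  rw [real_inner_self_eq_norm_mul_norm] at h
  rcases mul_self_eq_one_iff.1 h with h1 | h1
  · exact h1
  · nlinarith [norm_nonneg (vert m m i)]

lemma li (hm : 2 < m) : LinearIndependent ℝ (vert m m) := by
  rw [Fintype.linearIndependent_iff]
  intro a h
  have hc := cos_theta_pos hm
  have hs := sin_theta_pos hm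
  have key : ∀ k : Fin 4, (a 0 • vert m m 0 + a 1 • vert m m 1 + a 2 • vert m m 2
      + a 3 • vert m m 3) k = 0 := by
    intro k
    rw [show a 0 • vert m m 0 + a 1 • vert m m 1 + a 2 • vert m m 2 + a 3 • vert m m 3
        = ∑ i, a i • vert m m i by rw [Fin.sum_univ_four], h]
    rfl
  have k0 := key 0; have k1 := key 1; have k2 := key 2; have k3 := key 3
  simp only [vert0, vert1, vert2, vert3, pt, PiLp.add_apply, PiLp.smul_apply, smul_eq_mul,
    Matrix.cons_val_zero, Matrix.cons_val_one, Matrix.head_cons, Matrix.cons_val_two,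
    Matrix.cons_val_three, Matrix.tail_cons] at k0 k1 k2 k3
  have e1 : a 0 + a 1 = 0 := by
    have h' : (a 0 + a 1) * cos ((1/2) * π / m) = 0 := by linarith
    exact (mul_eq_zero.mp h').resolve_right (ne_of_gt hc)
  have e2 : a 1 - a 0 = 0 := by
    have h' : (a 1 - a 0) * sin ((1/2) * π / m) = 0 := by linarith
    exact (mul_eq_zero.mp h').resolve_right (ne_of_gt hs)
  have e3 : a 2 + a 3 = 0 := by
    have h' : (a 2 + a 3) * cos ((1/2) * π / m) = 0 := by linarith
    exact (mul_eq_zero.mp h').resolve_right (ne_of_gt hc)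
  have e4 : a 3 - a 2 = 0 := by
    have h' : (a 3 - a 2) * sin ((1/2) * π / m) = 0 := by linarith
    exact (mul_eq_zero.mp h').resolve_right (ne_of_gt hs)
  intro i
  fin_cases i <;> simp <;> linarith

def bas (hm : 2 < m) : Module.Basis (Fin 4) ℝ E4 :=
  basisOfLinearIndependentOfCardEqFinrank (li hm) (by simp [finrank_euclideanSpace_fin])

lemma repr_eq (hm : 2 < m) (x : E4) : ∑ i, (bas hm).repr x i • vert m m i = x := by
  have hb : ⇑(bas hm) = vert m m := coe_basisOfLinearIndependentOfCardEqFinrank _ _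
  conv_lhs => rw [← hb]
  exact (bas hm).sum_repr x

lemma coeff_uniq (hm : 2 < m) {c d : Fin 4 → ℝ}
    (h : ∑ i, c i • vert m m i = ∑ i, d i • vert m m i) : c = d := by
  have h0 : ∑ i, (c i - d i) • vert m m i = 0 := by
    simp only [sub_smul, Finset.sum_sub_distrib, h, sub_self]
  funext i
  have := Fintype.linearIndependent_iff.mp (li hm) (fun i => c i - d i) h0 i
  linarith

lemma isom_ext (hm : 2 < m) {g h : E4 ≃ₗᵢ[ℝ] E4}
    (he : ∀ i, g (vert m m i) = h (vert m m i)) : g = h := by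
  apply LinearIsometryEquiv.ext
  intro x
  rw [← repr_eq hm x, map_sum, map_sum]
  refine Finset.sum_congr rfl fun i _ => ?_
  rw [map_smul, map_smul, he i]

/-! ### Action on vertices -/

lemma rotv (i : Fin 4) : rot (vert m m i) = vert m m (![3, 2, 0, 1] i) := by
  fin_cases i <;>
    · rw [rot_apply]
      ext k
      fin_cases k <;> simp [vert0, vert1, vert2, vert3, pt]

lemma refv (i : Fin 4) : ref (vert m m i) = vert m m (![1, 0, 2, 3] i) := by
  fin_cases i <;>
    · rw [ref_apply]
      ext k
      fin_cases k <;> simp [vert0, vert1, vert2, vert3, pt]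

lemma rSigLowv (i : Fin 4) : rSigLow (vert m m i) = vert m m (![1, 0, 2, 3] i) := by
  rw [← ref_coe]; exact refv i

lemma rSigUpv (i : Fin 4) : rSigUp (vert m m i) = vert m m (![0, 1, 3, 2] i) := by
  rw [← refrot2_coe]
  rw [happ, pow_two, happ]
  rw [rotv, rotv, refv]
  fin_cases i <;> rfl

lemma rCv (i : Fin 4) : rC (vert m m i) = vert m m (![1, 0, 3, 2] i) := by
  rw [← rot2_coe, pow_two, happ, rotv, rotv]
  fin_cases i <;> rfl

/-! ### Stability under vertex permutations -/

lemma image_sub {g : E4 ≃ₗᵢ[ℝ] E4} {σ : Equiv.Perm (Fin 4)}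
    (hσ : ∀ i, g (vert m m i) = vert m m (σ i)) : g '' Tet m m ⊆ Tet m m := by
  rintro _ ⟨u, ⟨hu1, c, hc, r, hr, heq⟩, rfl⟩
  refine ⟨by rw [g.norm_map, hu1], fun i => c (σ.symm i), fun i => hc _, r, hr, ?_⟩
  have h1 : r • g u = g (r • u) := (map_smul g r u).symm
  rw [h1, heq, map_sum]
  simp_rw [map_smul, hσ]
  rw [← Equiv.sum_comp σ (fun j => c (σ.symm j) • vert m m j)]
  simp

lemma stab_of_perm {g : E4 ≃ₗᵢ[ℝ] E4} (σ : Equiv.Perm (Fin 4))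
    (hσ : ∀ i, g (vert m m i) = vert m m (σ i)) : g '' Tet m m = Tet m m := by
  have h2 : ∀ i, g.symm (vert m m i) = vert m m (σ.symm i) := by
    intro i
    have := hσ (σ.symm i)
    rw [Equiv.apply_symm_apply] at this
    rw [← this, LinearIsometryEquiv.symm_apply_apply]
  refine Set.Subset.antisymm (image_sub hσ) ?_
  intro u hu
  exact ⟨g.symm u, image_sub h2 ⟨u, hu, rfl⟩, g.apply_symm_apply u⟩

def permOf (a b : Fin 4 → Fin 4) (h1 : Function.LeftInverse b a)
    (h2 : Function.RightInverse b a) : Equiv.Perm (Fin 4) := ⟨a, b, h1, h2⟩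

lemma stab_rot : rot '' Tet m m = Tet m m :=
  stab_of_perm (permOf ![3, 2, 0, 1] ![2, 3, 1, 0] (by decide) (by decide)) rotv

lemma stab_ref : ref '' Tet m m = Tet m m :=
  stab_of_perm (permOf ![1, 0, 2, 3] ![1, 0, 2, 3] (by decide) (by decide)) refv

lemma stab_mul {g h : E4 ≃ₗᵢ[ℝ] E4} (hg : g '' Tet m m = Tet m m)
    (hh : h '' Tet m m = Tet m m) : (g * h) '' Tet m m = Tet m m := by
  rw [LinearIsometryEquiv.coe_mul, Set.image_comp, hh, hg]

lemma stab_one : (1 : E4 ≃ₗᵢ[ℝ] E4) '' Tet m m = Tet m m := by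
  rw [LinearIsometryEquiv.coe_one, Set.image_id]

lemma stab_rot_pow (n : ℕ) : (rot ^ n) '' Tet m m = Tet m m := by
  induction n with
  | zero => simpa using stab_one
  | succ k ih => rw [pow_succ]; exact stab_mul ih stab_rot

lemma stab_EE (d : DihedralGroup 4) : (EE d) '' Tet m m = Tet m m := by
  rcases d with i | i
  · exact stab_rot_pow i.val
  · exact stab_mul stab_ref (stab_rot_pow i.val)

/-! ### The cone argument -/

lemma image_cone {g : E4 ≃ₗᵢ[ℝ] E4} (hg : g '' Tet m m = Tet m m)
    {x : E4} {c : Fin 4 → ℝ} (hc : ∀ i, 0 ≤ c i) (hx : x = ∑ i, c i • vert m m i) :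
    ∃ d : Fin 4 → ℝ, (∀ i, 0 ≤ d i) ∧ g x = ∑ i, d i • vert m m i := by
  by_cases h0 : x = 0
  · exact ⟨0, fun i => le_refl 0, by simp [h0]⟩
  · have hnx : 0 < ‖x‖ := norm_pos_iff.mpr h0
    have hu1 : ‖(‖x‖⁻¹ • x : E4)‖ = 1 := by
      rw [norm_smul, Real.norm_eq_abs, abs_of_pos (inv_pos.mpr hnx), inv_mul_cancel₀ hnx.ne']
    have hmem : (‖x‖⁻¹ • x : E4) ∈ Tet m m :=
      ⟨hu1, c, hc, ‖x‖, hnx, by rw [smul_smul, mul_inv_cancel₀ hnx.ne', one_smul, hx]⟩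
    have hgu : g (‖x‖⁻¹ • x) ∈ Tet m m := hg ▸ Set.mem_image_of_mem g hmem
    obtain ⟨-, c', hc', r', hr', heq⟩ := hgu
    refine ⟨fun i => (‖x‖ / r') * c' i, fun i => mul_nonneg (by positivity) (hc' i), ?_⟩
    have hgx : g x = (‖x‖ / r') • (r' • g (‖x‖⁻¹ • x)) := by
      rw [smul_smul, div_mul_cancel₀ _ hr'.ne', map_smul, smul_smul,
        mul_inv_cancel₀ hnx.ne', one_smul]
    rw [hgx, heq, Finset.smul_sum]
    exact Finset.sum_congr rfl fun i _ => by rw [smul_smul]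

lemma stab_symm {g : E4 ≃ₗᵢ[ℝ] E4} (hg : g '' Tet m m = Tet m m) :
    g.symm '' Tet m m = Tet m m := by
  conv_lhs => rw [← hg]
  rw [← Set.image_comp]
  have : (⇑g.symm ∘ ⇑g) = id := by
    funext y
    simp
  rw [this, Set.image_id]

lemma vert_image (hm : 2 < m) {g : E4 ≃ₗᵢ[ℝ] E4} (hg : g '' Tet m m = Tet m m) (i : Fin 4) :
    ∃ j, g (vert m m i) = vert m m j := by
  have hdelta : vert m m i = ∑ j, (fun j => if j = i then (1:ℝ) else 0) j • vert m m j := by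
    simp [ite_smul]
  obtain ⟨c, hc, hgc⟩ := image_cone hg
    (c := fun j => if j = i then (1:ℝ) else 0) (fun j => by split <;> norm_num) hdelta
  -- some coefficient is nonzero
  have hn1 : ‖g (vert m m i)‖ = 1 := by rw [g.norm_map, norm_vert]
  have hne : ∃ j, c j ≠ 0 := by
    by_contra hco
    push_neg at hco
    have h0 : g (vert m m i) = 0 := by
      rw [hgc]
      exact Finset.sum_eq_zero fun j _ => by rw [hco j, zero_smul]
    rw [h0, norm_zero] at hn1
    norm_num at hn1
  obtain ⟨j, hj⟩ := hne
  have hcj : 0 < c j := (hc j).lt_of_ne (Ne.symm hj)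
  -- all other coefficients vanish
  have hothers : ∀ k, k ≠ j → c k = 0 := by
    intro k hk
    by_contra hck
    have hck' : 0 < c k := (hc k).lt_of_ne (Ne.symm hck)
    have hab : g (vert m m i) =
        (∑ l, (fun l => if l = j then c j else 0) l • vert m m l) +
        (∑ l, (fun l => if l = j then 0 else c l) l • vert m m l) := by
      rw [hgc, ← Finset.sum_add_distrib]
      refine Finset.sum_congr rfl fun l _ => ?_
      by_cases hl : l = j <;> simp [hl]
    have hg' := stab_symm hg
    obtain ⟨α, hα, hα'⟩ := image_cone hg'
      (c := fun l => if l = j then c j else 0) (fun l => by split <;> [exact le_of_lt hcj; rfl])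
      rfl
    obtain ⟨β, hβ, hβ'⟩ := image_cone hg'
      (c := fun l => if l = j then 0 else c l) (fun l => by split <;> [rfl; exact hc l])
      rfl
    have hsum : vert m m i =
        ∑ l, (fun l => α l + β l) l • vert m m l := by
      have h1 := congrArg g.symm hab
      rw [LinearIsometryEquiv.symm_apply_apply, map_add, hα', hβ',
        ← Finset.sum_add_distrib] at h1
      rw [h1]
      exact Finset.sum_congr rfl fun l _ => by rw [add_smul]
    have huniq : (fun l => α l + β l) = (fun l => if l = i then (1:ℝ) else 0) := by
      apply coeff_uniq hm
      rw [← hsum, hdelta]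
    have hα0 : ∀ l, l ≠ i → α l = 0 := by
      intro l hl
      have h1 := congrFun huniq l
      rw [if_neg hl] at h1
      have := hα l; have := hβ l
      linarith
    have hsa : g.symm (∑ l, (fun l => if l = j then c j else 0) l • vert m m l)
        = α i • vert m m i := by
      rw [hα']
      refine Finset.sum_eq_single i (fun l _ hl => by rw [hα0 l hl, zero_smul]) ?_
      intro habs
      exact absurd (Finset.mem_univ i) habs
    have ha2 : (∑ l, (fun l => if l = j then c j else 0) l • vert m m l)
        = ∑ l, (fun l => α i * c l) l • vert m m l := by
      have h1 := congrArg g hsa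
      rw [LinearIsometryEquiv.apply_symm_apply, map_smul, hgc, Finset.smul_sum] at h1
      rw [h1]
      exact Finset.sum_congr rfl fun l _ => by rw [smul_smul]
    have h2 := coeff_uniq hm ha2
    have hji := congrFun h2 j
    have hki := congrFun h2 k
    rw [if_pos rfl] at hji
    rw [if_neg hk] at hki
    have hai : α i = 0 := by
      rcases mul_eq_zero.mp hki.symm with h | h
      · exact h
      · exact absurd h hck
    rw [hai, zero_mul] at hji
    exact absurd hji (ne_of_gt hcj)
  -- so g (v i) = c j • v j and c j = 1
  have hone : g (vert m m i) = c j • vert m m j := by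
    rw [hgc]
    refine Finset.sum_eq_single j (fun l _ hl => by rw [hothers l hl, zero_smul]) ?_
    intro habs
    exact absurd (Finset.mem_univ j) habs
  have hcj1 : c j = 1 := by
    rw [hone, norm_smul, Real.norm_eq_abs, abs_of_pos hcj, norm_vert, mul_one] at hn1
    exact hn1
  exact ⟨j, by rw [hone, hcj1, one_smul]⟩

/-! ### Classification -/

lemma hlink (hm : 2 < m) (a b : Fin 4) (h : Gmat m a b = cos (π / m)) :
    (a = 0 ∧ b = 1) ∨ (a = 1 ∧ b = 0) ∨ (a = 2 ∧ b = 3) ∨ (a = 3 ∧ b = 2) := by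
  have h1 := gam_pos hm
  have h2 := gam_lt_one hm
  fin_cases a <;> fin_cases b <;>
    simp_all [Gmat, Matrix.vecHead, Matrix.vecTail] <;> linarith

lemma EEr0v (i : Fin 4) : EE (.r 0) (vert m m i) = vert m m i := by
  show (rot ^ (0 : ZMod 4).val) (vert m m i) = _
  rfl

lemma EEr1v (i : Fin 4) : EE (.r 1) (vert m m i) = vert m m (![3, 2, 0, 1] i) := by
  show (rot ^ (1 : ZMod 4).val) (vert m m i) = _
  rw [show ((1 : ZMod 4)).val = 1 from rfl, pow_one, rotv]

lemma EEr2v (i : Fin 4) : EE (.r 2) (vert m m i) = vert m m (![1, 0, 3, 2] i) := by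
  show (rot ^ (2 : ZMod 4).val) (vert m m i) = _
  rw [show ((2 : ZMod 4)).val = 2 from rfl, pow_two, happ, rotv, rotv]
  fin_cases i <;> rfl

lemma EEr3v (i : Fin 4) : EE (.r 3) (vert m m i) = vert m m (![2, 3, 1, 0] i) := by
  show (rot ^ (3 : ZMod 4).val) (vert m m i) = _
  rw [show ((3 : ZMod 4)).val = 3 from rfl,
    show rot ^ 3 = rot * (rot * rot) by rw [pow_succ, pow_two, mul_assoc],
    happ, happ, rotv, rotv, rotv]
  fin_cases i <;> rfl

lemma EEsr0v (i : Fin 4) : EE (.sr 0) (vert m m i) = vert m m (![1, 0, 2, 3] i) := by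
  show (ref * rot ^ (0 : ZMod 4).val) (vert m m i) = _
  rw [show ((0 : ZMod 4)).val = 0 from rfl, pow_zero, mul_one, refv]

lemma EEsr1v (i : Fin 4) : EE (.sr 1) (vert m m i) = vert m m (![3, 2, 1, 0] i) := by
  show (ref * rot ^ (1 : ZMod 4).val) (vert m m i) = _
  rw [show ((1 : ZMod 4)).val = 1 from rfl, pow_one, happ, rotv, refv]
  fin_cases i <;> rfl

lemma EEsr2v (i : Fin 4) : EE (.sr 2) (vert m m i) = vert m m (![0, 1, 3, 2] i) := by
  show (ref * rot ^ (2 : ZMod 4).val) (vert m m i) = _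
  rw [show ((2 : ZMod 4)).val = 2 from rfl, pow_two, happ, happ, rotv, rotv, refv]
  fin_cases i <;> rfl

lemma EEsr3v (i : Fin 4) : EE (.sr 3) (vert m m i) = vert m m (![2, 3, 0, 1] i) := by
  show (ref * rot ^ (3 : ZMod 4).val) (vert m m i) = _
  rw [show ((3 : ZMod 4)).val = 3 from rfl,
    show rot ^ 3 = rot * (rot * rot) by rw [pow_succ, pow_two, mul_assoc],
    happ, happ, happ, rotv, rotv, rotv, refv]
  fin_cases i <;> rfl

lemma classify (hm : 2 < m) {g : E4 ≃ₗᵢ[ℝ] E4} (hg : g '' Tet m m = Tet m m) :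
    ∃ d : DihedralGroup 4, g = EE d := by
  choose f hf using vert_image hm hg
  have hinj : ∀ i j : Fin 4, i ≠ j → f i ≠ f j := by
    intro i j hij habs
    refine hij ((li hm).injective (g.injective ?_))
    rw [hf i, hf j, habs]
  have hGram : ∀ i j, Gmat m (f i) (f j) = Gmat m i j := by
    intro i j
    rw [← inner_vert, ← inner_vert, ← hf i, ← hf j]
    exact g.inner_map_map _ _
  have l1 := hlink hm (f 0) (f 1) (by
    rw [hGram 0 1]; simp [Gmat])
  have l2 := hlink hm (f 2) (f 3) (by
    rw [hGram 2 3]; simp [Gmat, Matrix.vecHead, Matrix.vecTail])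
  have d02 := hinj 0 2 (by decide)
  have d03 := hinj 0 3 (by decide)
  have d12 := hinj 1 2 (by decide)
  have d13 := hinj 1 3 (by decide)
  rcases l1 with ⟨h0, h1⟩ | ⟨h0, h1⟩ | ⟨h0, h1⟩ | ⟨h0, h1⟩ <;>
    rcases l2 with ⟨h2, h3⟩ | ⟨h2, h3⟩ | ⟨h2, h3⟩ | ⟨h2, h3⟩
  · exact absurd (h0.trans h2.symm) d02
  · exact absurd (h1.trans h2.symm) d12
  · -- f = (0,1,2,3) : identity
    refine ⟨.r 0, isom_ext hm fun i => ?_⟩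
    fin_cases i <;> rw [hf, EEr0v] <;> simp [h0, h1, h2, h3]
  · -- f = (0,1,3,2) : sr 2
    refine ⟨.sr 2, isom_ext hm fun i => ?_⟩
    fin_cases i <;> rw [hf, EEsr2v] <;> simp [h0, h1, h2, h3]
  · exact absurd (h1.trans h2.symm) d12
  · exact absurd (h0.trans h2.symm) d02
  · -- f = (1,0,2,3) : sr 0
    refine ⟨.sr 0, isom_ext hm fun i => ?_⟩
    fin_cases i <;> rw [hf, EEsr0v] <;> simp [h0, h1, h2, h3]
  · -- f = (1,0,3,2) : r 2
    refine ⟨.r 2, isom_ext hm fun i => ?_⟩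
    fin_cases i <;> rw [hf, EEr2v] <;> simp [h0, h1, h2, h3]
  · -- f = (2,3,0,1) : sr 3
    refine ⟨.sr 3, isom_ext hm fun i => ?_⟩
    fin_cases i <;> rw [hf, EEsr3v] <;> simp [h0, h1, h2, h3]
  · -- f = (2,3,1,0) : r 3
    refine ⟨.r 3, isom_ext hm fun i => ?_⟩
    fin_cases i <;> rw [hf, EEr3v] <;> simp [h0, h1, h2, h3]
  · exact absurd (h0.trans h2.symm) d02
  · exact absurd (h0.trans h3.symm) d03
  · -- f = (3,2,0,1) : r 1
    refine ⟨.r 1, isom_ext hm fun i => ?_⟩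
    fin_cases i <;> rw [hf, EEr1v] <;> simp [h0, h1, h2, h3]
  · -- f = (3,2,1,0) : sr 1
    refine ⟨.sr 1, isom_ext hm fun i => ?_⟩
    fin_cases i <;> rw [hf, EEsr1v] <;> simp [h0, h1, h2, h3]
  · exact absurd (h1.trans h2.symm) d12
  · exact absurd (h0.trans h2.symm) d02

/-! ### Injectivity of `EE` -/

def wtest : E4 := WithLp.toLp 2 ![1, 2, 3, 4]

lemma EE_one : ∀ d : DihedralGroup 4, EE d = 1 → d = 1 := by
  have key : ∀ (t : E4 ≃ₗᵢ[ℝ] E4), t = 1 → ∀ x : E4, t x = x := by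
    intro t ht x; rw [ht]; rfl
  intro d h
  have hz : ∀ i : ZMod 4, i = 0 ∨ i = 1 ∨ i = 2 ∨ i = 3 := by decide
  rcases d with i | i <;>
    rcases hz i with rfl | rfl | rfl | rfl
  · rfl
  · exfalso
    have h2 := key _ h wtest
    rw [show EE (.r 1) = rot ^ 1 from rfl, pow_one, rot_apply] at h2
    have h3 := congrFun (congrArg WithLp.ofLp h2) 0
    simp [wtest] at h3 <;> norm_num at h3
  · exfalso
    have h2 := key _ h wtest
    rw [show EE (.r 2) = rot ^ 2 from rfl, pow_two, happ] at h2
    simp only [rot_apply] at h2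
    have h3 := congrFun (congrArg WithLp.ofLp h2) 1
    simp [wtest] at h3 <;> norm_num at h3
  · exfalso
    have h2 := key _ h wtest
    rw [show EE (.r 3) = rot * (rot * rot) from by
      rw [show EE (.r 3) = rot ^ 3 from rfl, pow_succ, pow_two, mul_assoc], happ, happ] at h2
    simp only [rot_apply] at h2
    have h3 := congrFun (congrArg WithLp.ofLp h2) 0
    simp [wtest] at h3 <;> norm_num at h3
  · exfalso
    have h2 := key _ h wtest
    rw [show EE (.sr 0) = ref * 1 from rfl, mul_one, ref_apply] at h2
    have h3 := congrFun (congrArg WithLp.ofLp h2) 1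
    simp [wtest] at h3 <;> norm_num at h3
  · exfalso
    have h2 := key _ h wtest
    rw [show EE (.sr 1) = ref * rot ^ 1 from rfl, pow_one, happ] at h2
    simp only [rot_apply, ref_apply] at h2
    have h3 := congrFun (congrArg WithLp.ofLp h2) 0
    simp [wtest] at h3 <;> norm_num at h3
  · exfalso
    have h2 := key _ h wtest
    rw [show EE (.sr 2) = ref * rot ^ 2 from rfl, pow_two, happ, happ] at h2
    simp only [rot_apply, ref_apply] at h2
    have h3 := congrFun (congrArg WithLp.ofLp h2) 3
    simp [wtest] at h3 <;> norm_num at h3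
  · exfalso
    have h2 := key _ h wtest
    rw [show EE (.sr 3) = ref * (rot * (rot * rot)) from by
      rw [show EE (.sr 3) = ref * rot ^ 3 from rfl, pow_succ, pow_two, mul_assoc],
      happ, happ, happ] at h2
    simp only [rot_apply, ref_apply] at h2
    have h3 := congrFun (congrArg WithLp.ofLp h2) 0
    simp [wtest] at h3 <;> norm_num at h3

def EEhom : DihedralGroup 4 →* (E4 ≃ₗᵢ[ℝ] E4) := MonoidHom.mk' EE EE_mul

lemma EE_inj : Function.Injective EE :=
  (injective_iff_map_eq_one EEhom).mpr EE_one

end Stmt11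

open Stmt11

/-- For `m = k > 2` the stabilizer of `Ω₀⁰` in `O(4)` is isomorphic to the dihedral group of
order 8 (via a multiplication-preserving bijection), and it contains the group
`{id, R_{Σ₀}, R_{Σ⁰}, R_{C₀⁰}}` as a subgroup, which then has index 2. -/
theorem statement11 (m : ℕ) (hm : 2 < m) :
    (∃ e : DihedralGroup 4 ≃ {g : E4 ≃ₗᵢ[ℝ] E4 // g '' Tet m m = Tet m m},
      ∀ a b : DihedralGroup 4, ⇑((e (a * b)).1) = ⇑((e a).1) ∘ ⇑((e b).1)) ∧
    (∀ g : E4 ≃ₗᵢ[ℝ] E4,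
      (⇑g = id ∨ ⇑g = rSigLow ∨ ⇑g = rSigUp ∨ ⇑g = rC) → g '' Tet m m = Tet m m) ∧
    Nat.card {g : E4 ≃ₗᵢ[ℝ] E4 // g '' Tet m m = Tet m m} =
      2 * Nat.card {f : E4 → E4 | f = id ∨ f = rSigLow ∨ f = rSigUp ∨ f = rC} := by
  have hbij : Function.Bijective (fun d : DihedralGroup 4 =>
      (⟨EE d, stab_EE d⟩ : {g : E4 ≃ₗᵢ[ℝ] E4 // g '' Tet m m = Tet m m})) := by
    constructor
    · intro a b hab
      exact EE_inj (congrArg Subtype.val hab)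
    · rintro ⟨g, hg⟩
      obtain ⟨d, hd⟩ := classify hm hg
      exact ⟨d, Subtype.ext hd.symm⟩
  refine ⟨⟨Equiv.ofBijective _ hbij, ?_⟩, ?_, ?_⟩
  · intro a b
    show ⇑(EE (a * b)) = ⇑(EE a) ∘ ⇑(EE b)
    rw [EE_mul, LinearIsometryEquiv.coe_mul]
  · intro g hg
    have him : g '' Tet m m = ⇑g '' Tet m m := rfl
    rcases hg with h | h | h | h
    · rw [him, h, Set.image_id]
    · rw [him, h, ← ref_coe]
      exact stab_ref
    · rw [him, h, ← refrot2_coe]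
      exact stab_mul stab_ref (stab_rot_pow 2)
    · rw [him, h, ← rot2_coe]
      exact stab_rot_pow 2
  · have h1 : Nat.card {g : E4 ≃ₗᵢ[ℝ] E4 // g '' Tet m m = Tet m m}
        = Nat.card (DihedralGroup 4) := Nat.card_congr (Equiv.ofBijective _ hbij).symm
    rw [h1, DihedralGroup.nat_card]
    have hset : {f : E4 → E4 | f = id ∨ f = rSigLow ∨ f = rSigUp ∨ f = rC}
        = ({id, rSigLow, rSigUp, rC} : Set (E4 → E4)) := rfl
    rw [hset]
    -- distinctness
    have z : E4 := WithLp.toLp 2 ![1, 1, 1, 1]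
    have hLow : rSigLow (WithLp.toLp 2 ![1, 1, 1, 1] : E4) 1 = -1 := by simp [rSigLow, pt]
    have hUp : rSigUp (WithLp.toLp 2 ![1, 1, 1, 1] : E4) 1 = 1 := by simp [rSigUp, pt]
    have hUp3 : rSigUp (WithLp.toLp 2 ![1, 1, 1, 1] : E4) 3 = -1 := by simp [rSigUp, pt]
    have hLow3 : rSigLow (WithLp.toLp 2 ![1, 1, 1, 1] : E4) 3 = 1 := by simp [rSigLow, pt]
    have hC : rC (WithLp.toLp 2 ![1, 1, 1, 1] : E4) 1 = -1 := by simp [rC, pt]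
    have hC3 : rC (WithLp.toLp 2 ![1, 1, 1, 1] : E4) 3 = -1 := by simp [rC, pt]
    have hid1 : (id : E4 → E4) (WithLp.toLp 2 ![1, 1, 1, 1] : E4) 1 = 1 := by norm_num
    have hid3 : (id : E4 → E4) (WithLp.toLp 2 ![1, 1, 1, 1] : E4) 3 = 1 := by simp
    have d1 : (id : E4 → E4) ≠ rSigLow := fun h => by
      have := congrFun (congrArg WithLp.ofLp (congrFun h (WithLp.toLp 2 ![1, 1, 1, 1] : E4))) 1; rw [hid1, hLow] at this; norm_num at this
    have d2 : (id : E4 → E4) ≠ rSigUp := fun h => by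
      have := congrFun (congrArg WithLp.ofLp (congrFun h (WithLp.toLp 2 ![1, 1, 1, 1] : E4))) 3; rw [hid3, hUp3] at this; norm_num at this
    have d3 : (id : E4 → E4) ≠ rC := fun h => by
      have := congrFun (congrArg WithLp.ofLp (congrFun h (WithLp.toLp 2 ![1, 1, 1, 1] : E4))) 1; rw [hid1, hC] at this; norm_num at this
    have d4 : rSigLow ≠ rSigUp := fun h => by
      have := congrFun (congrArg WithLp.ofLp (congrFun h (WithLp.toLp 2 ![1, 1, 1, 1] : E4))) 1; rw [hLow, hUp] at this; norm_num at this
    have d5 : rSigLow ≠ rC := fun h => by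
      have := congrFun (congrArg WithLp.ofLp (congrFun h (WithLp.toLp 2 ![1, 1, 1, 1] : E4))) 3; rw [hLow3, hC3] at this; norm_num at this
    have d6 : rSigUp ≠ rC := fun h => by
      have := congrFun (congrArg WithLp.ofLp (congrFun h (WithLp.toLp 2 ![1, 1, 1, 1] : E4))) 1; rw [hUp, hC] at this; norm_num at this
    rw [Nat.card_coe_set_eq]
    rw [Set.ncard_insert_of_notMem (by simp [d1, d2, d3])
        ((Set.finite_singleton _).insert _ |>.insert _),
      Set.ncard_insert_of_notMem (by simp [d4, d5]) ((Set.finite_singleton _).insert _),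
      Set.ncard_insert_of_notMem (by simp [d6]) (Set.finite_singleton _),
      Set.ncard_singleton]


end
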